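/- Let A be a unital associative algebra and let r ∈ A ⊗ A be a solution of the associative Yang-Baxter equation r¹³r¹² − r¹²r²³ + r²³r¹³ = 0. Then the pair (r, r) is an associative Yang-Baxter pair, and hence the operator R(a) = Σ r⁽¹⁾ a r⁽²⁾ satisfies R(a)R(b) = R(R(a)b + aR(b)), i.e. R is a Rota-Baxter operator of weight 0 on A. -/
import Mathlib


open scoped TensorProduct

/-- `Fbil x y` is the operator `a ↦ x * a * y`. -/
noncomputable def Fbil (k A : Type*) [CommSemiring k] [Ring A] [Algebra k A] :
    A →ₗ[k] A →ₗ[k] (A →ₗ[k] A) :=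
  LinearMap.mk₂ k (fun x y => (LinearMap.mulLeft k x).comp (LinearMap.mulRight k y))
    (fun x x' y => by ext a; simp [add_mul])
    (fun c x y => by ext a; simp [smul_mul_assoc])
    (fun x y y' => by ext a; simp [mul_add])
    (fun c x y => by ext a; simp [mul_smul_comm])

/-- `F2 (Σ x ⊗ y)` is the operator `a ↦ Σ x * a * y`. -/
noncomputable def F2 (k A : Type*) [CommSemiring k] [Ring A] [Algebra k A] :
    A ⊗[k] A →ₗ[k] (A →ₗ[k] A) :=
  TensorProduct.lift (Fbil k A)

/-- `r ↦ r¹² = r ⊗ 1`. -/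
noncomputable def e12 (k A : Type*) [CommSemiring k] [Ring A] [Algebra k A] :
    A ⊗[k] A →ₐ[k] (A ⊗[k] A) ⊗[k] A :=
  Algebra.TensorProduct.includeLeft

/-- `a ⊗ b ↦ (a ⊗ b)¹³ = a ⊗ 1 ⊗ b`. -/
noncomputable def e13 (k A : Type*) [CommSemiring k] [Ring A] [Algebra k A] :
    A ⊗[k] A →ₐ[k] (A ⊗[k] A) ⊗[k] A :=
  Algebra.TensorProduct.map Algebra.TensorProduct.includeLeft (AlgHom.id k A)

/-- `r ↦ r²³ = 1 ⊗ r`. -/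
noncomputable def e23 (k A : Type*) [CommSemiring k] [Ring A] [Algebra k A] :
    A ⊗[k] A →ₐ[k] (A ⊗[k] A) ⊗[k] A :=
  Algebra.TensorProduct.map Algebra.TensorProduct.includeRight (AlgHom.id k A)

@[simp] lemma F2_tmul (k A : Type*) [CommSemiring k] [Ring A] [Algebra k A] (x y a : A) :
    F2 k A (x ⊗ₜ y) a = x * a * y := by
  simp [F2, Fbil, mul_assoc]

/-- `Phi ((x ⊗ y) ⊗ z)` is the operator `(a, b) ↦ x * a * y * b * z`. -/
noncomputable def Phi (k A : Type*) [CommSemiring k] [Ring A] [Algebra k A] :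
    (A ⊗[k] A) ⊗[k] A →ₗ[k] (A →ₗ[k] A →ₗ[k] A) :=
  TensorProduct.lift <| LinearMap.mk₂ k
    (fun t z => LinearMap.mk₂ k (fun a b => F2 k A t a * b * z)
      (fun a a' b => by simp [add_mul])
      (fun c a b => by simp [smul_mul_assoc])
      (fun a b b' => by simp [mul_add, add_mul])
      (fun c a b => by simp [mul_smul_comm, smul_mul_assoc]))
    (fun t t' z => by ext a b; simp [add_mul])
    (fun c t z => by ext a b; simp [smul_mul_assoc])
    (fun t z z' => by ext a b; simp [mul_add])
    (fun c t z => by ext a b; simp [mul_smul_comm])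

@[simp] lemma Phi_tmul (k A : Type*) [CommSemiring k] [Ring A] [Algebra k A]
    (t : A ⊗[k] A) (z a b : A) :
    Phi k A (t ⊗ₜ z) a b = F2 k A t a * b * z := by
  simp [Phi]

@[simp] lemma e12_tmul (k A : Type*) [CommSemiring k] [Ring A] [Algebra k A] (u v : A) :
    e12 k A (u ⊗ₜ v) = (u ⊗ₜ v) ⊗ₜ (1 : A) := rfl
@[simp] lemma e13_tmul (k A : Type*) [CommSemiring k] [Ring A] [Algebra k A] (x y : A) :
    e13 k A (x ⊗ₜ y) = (x ⊗ₜ (1 : A)) ⊗ₜ y := rfl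
@[simp] lemma e23_tmul (k A : Type*) [CommSemiring k] [Ring A] [Algebra k A] (x y : A) :
    e23 k A (x ⊗ₜ y) = ((1 : A) ⊗ₜ x) ⊗ₜ y := rfl

lemma Phi_e13_mul_e12 (k A : Type*) [CommSemiring k] [Ring A] [Algebra k A]
    (s t : A ⊗[k] A) (a b : A) :
    Phi k A (e13 k A s * e12 k A t) a b = F2 k A s (F2 k A t a * b) := by
  induction s using TensorProduct.induction_on with
  | zero => simp
  | add s s' hs hs' => simp only [map_add, add_mul, mul_add, LinearMap.add_apply, hs, hs']
  | tmul x y =>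
    induction t using TensorProduct.induction_on with
    | zero => simp
    | add t t' ht ht' => simp only [map_add, add_mul, mul_add, LinearMap.add_apply, ht, ht']
    | tmul u v =>
      simp [Algebra.TensorProduct.tmul_mul_tmul, mul_assoc]

lemma Phi_e12_mul_e23 (k A : Type*) [CommSemiring k] [Ring A] [Algebra k A]
    (s t : A ⊗[k] A) (a b : A) :
    Phi k A (e12 k A t * e23 k A s) a b = F2 k A t a * F2 k A s b := by
  induction s using TensorProduct.induction_on with
  | zero => simp
  | add s s' hs hs' => simp only [map_add, add_mul, mul_add, LinearMap.add_apply, hs, hs']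
  | tmul x y =>
    induction t using TensorProduct.induction_on with
    | zero => simp
    | add t t' ht ht' => simp only [map_add, add_mul, mul_add, LinearMap.add_apply, ht, ht']
    | tmul u v =>
      simp [Algebra.TensorProduct.tmul_mul_tmul, mul_assoc]

lemma Phi_e23_mul_e13 (k A : Type*) [CommSemiring k] [Ring A] [Algebra k A]
    (s t : A ⊗[k] A) (a b : A) :
    Phi k A (e23 k A s * e13 k A t) a b = F2 k A t (a * F2 k A s b) := by
  induction s using TensorProduct.induction_on with
  | zero => simp
  | add s s' hs hs' => simp only [map_add, add_mul, mul_add, LinearMap.add_apply, hs, hs']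
  | tmul x y =>
    induction t using TensorProduct.induction_on with
    | zero => simp
    | add t t' ht ht' => simp only [map_add, add_mul, mul_add, LinearMap.add_apply, ht, ht']
    | tmul u v =>
      simp [Algebra.TensorProduct.tmul_mul_tmul, mul_assoc]

/-- A solution `r` of the associative Yang-Baxter equation gives the associative Yang-Baxter
pair `(r, r)`, and hence `R = F2 r` is a Rota-Baxter operator of weight `0`. -/
theorem stmt13 (k A : Type*) [Field k] [Ring A] [Algebra k A] (r : A ⊗[k] A)
    (h : e13 k A r * e12 k A r - e12 k A r * e23 k A r + e23 k A r * e13 k A r = 0) :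
    (e13 k A r * e12 k A r - e12 k A r * e23 k A r + e23 k A r * e13 k A r = 0 ∧
     e13 k A r * e12 k A r - e12 k A r * e23 k A r + e23 k A r * e13 k A r = 0) ∧
    ∀ a b : A, F2 k A r a * F2 k A r b = F2 k A r (F2 k A r a * b + a * F2 k A r b) := by
  refine ⟨⟨h, h⟩, fun a b => ?_⟩
  have H : F2 k A r (F2 k A r a * b) - F2 k A r a * F2 k A r b
      + F2 k A r (a * F2 k A r b) = 0 := by
    have := congrArg (fun t => Phi k A t a b) h
    simpa [map_add, map_sub, Phi_e13_mul_e12 k A r r a b, Phi_e12_mul_e23 k A r r a b,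
      Phi_e23_mul_e13 k A r r a b] using this
  rw [map_add, ← sub_eq_zero, ← neg_eq_zero, neg_sub]
  rwa [sub_add_eq_add_sub] at H
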